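/- Let Γ = (G,X) and Δ = (H,Y) be graphs with sources, T a recursive tree decomposition of Γ, and α: G → H a surjective graph homomorphism (surjective on vertices and edges) such that α(X) = Y and whenever α identifies two vertices v ≠ w, there is a subtree T' of T whose root label contains both v and w. Then there is a recursive tree decomposition of Δ of width at most width(T). -/

import Mathlib

open CategoryTheory MonoidalCategory

namespace MWidth

section


variable {V E : Type}

/-- every edge has one or two endpoints -/
def EndsSmall (ends : E → Set V) : Prop := ∀ e, ∃ u w : V, ends e = {u, w}

/-! ### Tree decompositions (Robertson–Seymour style) -/

structure TreeDec (ends : E → Set V) (ι : Type) where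
  Y : SimpleGraph ι
  conn : Y.Connected
  acyc : Y.IsAcyclic
  t : ι → Set V
  cover : ∀ v : V, ∃ i, v ∈ t i
  edge : ∀ e : E, ∃ i, ends e ⊆ t i
  sep : ∀ ⦃i j k : ι⦄ (p : Y.Walk i k), p.IsPath → j ∈ p.support → t i ∩ t k ⊆ t j

noncomputable def TreeDec.width {ends : E → Set V} {ι : Type} (D : TreeDec ends ι) : ℕ :=
  ⨆ i, (D.t i).ncard

/-! ### Recursive tree decompositions -/

inductive RTree (V : Type) where
  | nil : RTree V
  | node : RTree V → Set V → RTree V → RTree V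

namespace RTree

noncomputable def width : RTree V → ℕ
  | nil => 0
  | node T1 W T2 => max W.ncard (max T1.width T2.width)

def label : RTree V → Set V
  | nil => ∅
  | node _ W _ => W

inductive Subtree : RTree V → RTree V → Prop
  | refl (T : RTree V) : Subtree T T
  | left {T' T1 T2 : RTree V} {W : Set V} : Subtree T' T1 → Subtree T' (node T1 W T2)
  | right {T' T1 T2 : RTree V} {W : Set V} : Subtree T' T2 → Subtree T' (node T1 W T2)

end RTree

/-- `IsRTD ends vs es X T` : `T` is a recursive tree decomposition of the graph with
sources `((vs,es),X)` living inside the ambient graph `(V,E,ends)`. -/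
def IsRTD (ends : E → Set V) : Set V → Set E → Set V → RTree V → Prop
  | vs, es, _, .nil => vs = ∅ ∧ es = ∅
  | vs, es, X, .node T1 W T2 =>
      W.Nonempty ∧ W ⊆ vs ∧ X ⊆ W ∧
      ∃ (vs1 vs2 : Set V) (es1 es2 : Set E),
        vs1 ⊆ vs ∧ vs2 ⊆ vs ∧ es1 ⊆ es ∧ es2 ⊆ es ∧
        (∀ e ∈ es1, ends e ⊆ vs1) ∧ (∀ e ∈ es2, ends e ⊆ vs2) ∧
        W ∪ vs1 ∪ vs2 = vs ∧ es1 ∩ es2 = ∅ ∧ vs1 ∩ vs2 ⊆ W ∧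
        (∀ e ∈ es \ (es1 ∪ es2), ends e ⊆ W) ∧
        IsRTD ends vs1 es1 (vs1 ∩ W) T1 ∧ IsRTD ends vs2 es2 (vs2 ∩ W) T2

/-! ### Path decompositions -/

def IsPathDec (ends : E → Set V) (L : List (Set V)) : Prop :=
  (∀ v : V, ∃ W ∈ L, v ∈ W) ∧ (∀ e : E, ∃ W ∈ L, ends e ⊆ W) ∧
    ∀ i j k : ℕ, i ≤ j → j ≤ k → k < L.length →
      L.getD i ∅ ∩ L.getD k ∅ ⊆ L.getD j ∅

/-- width of a list of bags (used both for path decompositions and recursive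
path decompositions) -/
noncomputable def pdWidth : List (Set V) → ℕ
  | [] => 0
  | W :: L => max W.ncard (pdWidth L)

/-- `IsRPD ends vs es X L` : `L` is a recursive path decomposition of `((vs,es),X)`. -/
def IsRPD (ends : E → Set V) : Set V → Set E → Set V → List (Set V) → Prop
  | vs, es, _, [] => vs = ∅ ∧ es = ∅
  | vs, es, X, V1 :: L =>
      V1.Nonempty ∧ V1 ⊆ vs ∧ X ⊆ V1 ∧
      ∃ (vs' : Set V) (es' : Set E),
        vs' ⊆ vs ∧ es' ⊆ es ∧ (∀ e ∈ es', ends e ⊆ vs') ∧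
        V1 ∪ vs' = vs ∧ (∀ e ∈ es \ es', ends e ⊆ V1) ∧
        IsRPD ends vs' es' (V1 ∩ vs') L

/-! ### Branch decompositions -/

/-- binary trees whose nodes are labelled by subgraphs-with-sources `(vs,es,X)` -/
inductive BT (V E : Type) where
  | nil : BT V E
  | leaf : Set V → Set E → Set V → BT V E
  | node : BT V E → Set V → Set E → Set V → BT V E → BT V E

namespace BT

noncomputable def width : BT V E → ℕ
  | nil => 0
  | leaf _ _ X => X.ncard
  | node T1 _ _ X T2 => max X.ncard (max T1.width T2.width)

def labelV : BT V E → Set V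
  | nil => ∅
  | leaf vs _ _ => vs
  | node _ vs _ _ _ => vs

def labelX : BT V E → Set V
  | nil => ∅
  | leaf _ _ X => X
  | node _ _ _ X _ => X

inductive Subtree : BT V E → BT V E → Prop
  | refl (T : BT V E) : Subtree T T
  | left {T' T1 T2 : BT V E} {vs X : Set V} {es : Set E} :
      Subtree T' T1 → Subtree T' (node T1 vs es X T2)
  | right {T' T1 T2 : BT V E} {vs X : Set V} {es : Set E} :
      Subtree T' T2 → Subtree T' (node T1 vs es X T2)

end BT

/-- `IsRBD ends vs es X T` : `T` is a recursive branch decomposition of `((vs,es),X)`. -/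
def IsRBD (ends : E → Set V) : Set V → Set E → Set V → BT V E → Prop
  | _, es, _, .nil => es = ∅
  | vs, es, X, .leaf vs' es' X' => vs' = vs ∧ es' = es ∧ X' = X ∧ ∃ e, es = {e}
  | vs, es, X, .node T1 vs' es' X' T2 =>
      vs' = vs ∧ es' = es ∧ X' = X ∧
      ∃ (vs1 vs2 : Set V) (es1 es2 : Set E),
        vs1 ⊆ vs ∧ vs2 ⊆ vs ∧
        (∀ e ∈ es1, ends e ⊆ vs1) ∧ (∀ e ∈ es2, ends e ⊆ vs2) ∧
        es1 ∪ es2 = es ∧ es1 ∩ es2 = ∅ ∧ vs1 ∪ vs2 = vs ∧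
        IsRBD ends vs1 es1 ((vs1 ∩ vs2) ∪ (X ∩ vs1)) T1 ∧
        IsRBD ends vs2 es2 ((vs1 ∩ vs2) ∪ (X ∩ vs2)) T2

/-- branch decompositions: subcubic trees with leaves in bijection with the edges -/
structure BranchDec (E ι : Type) where
  Y : SimpleGraph ι
  conn : Y.Connected
  acyc : Y.IsAcyclic
  subcubic : ∀ i : ι, (Y.neighborSet i).ncard ≤ 3
  b : {i : ι // (Y.neighborSet i).ncard = 1} ≃ E

/-- the edges of `G` on the `u`-side of the edge `{u,w}` of the decomposition tree -/
def BranchDec.side {E ι : Type} (D : BranchDec E ι) (u w : ι) : Set E :=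
  { e | ∃ l : {i : ι // (D.Y.neighborSet i).ncard = 1},
      (D.Y.deleteEdges {s(u, w)}).Reachable u l.1 ∧ D.b l = e }

def edgeEnds (ends : E → Set V) (A : Set E) : Set V := ⋃ e ∈ A, ends e

noncomputable def BranchDec.order (ends : E → Set V) {ι : Type} (D : BranchDec E ι)
    (u w : ι) : ℕ :=
  (edgeEnds ends (D.side u w) ∩ edgeEnds ends (D.side w u)).ncard

noncomputable def BranchDec.bwidth (ends : E → Set V) {ι : Type} (D : BranchDec E ι) : ℕ :=
  ⨆ p : {p : ι × ι // D.Y.Adj p.1 p.2}, D.order ends p.1.1 p.1.2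

/-! ### min-max widths -/

noncomputable def treewidth (ends : E → Set V) : ℕ :=
  sInf { n | ∃ (ι : Type) (_ : Finite ι) (D : TreeDec ends ι), D.width = n }

noncomputable def pathwidth (ends : E → Set V) : ℕ :=
  sInf { n | ∃ L : List (Set V), IsPathDec ends L ∧ pdWidth L = n }

noncomputable def branchwidth (ends : E → Set V) : ℕ :=
  sInf { n | ∃ (ι : Type) (_ : Fintype ι) (D : BranchDec E ι), D.bwidth ends = n }

end


section Aux

variable {V E W F : Type}

def RTree.map (f : V → W) : RTree V → RTree W
  | .nil => .nil
  | .node T1 L T2 => .node (T1.map f) (f '' L) (T2.map f)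

lemma RTree.width_map_le [Finite V] (f : V → W) : ∀ T : RTree V, (T.map f).width ≤ T.width
  | .nil => le_refl _
  | .node T1 L T2 => by
    simp only [RTree.map, RTree.width]
    exact max_le_max (Set.ncard_image_le (Set.toFinite L))
      (max_le_max (RTree.width_map_le f T1) (RTree.width_map_le f T2))

lemma IsRTD.self_label_subset {ends : E → Set V} {T : RTree V} {vs : Set V} {es : Set E}
    {X : Set V} (h : IsRTD ends vs es X T) : T.label ⊆ vs := by
  cases T with
  | nil => simp [RTree.label]
  | node T1 L T2 => exact h.2.1

lemma IsRTD.label_subset {ends : E → Set V} :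
    ∀ {T T' : RTree V} {vs es X}, IsRTD ends vs es X T → RTree.Subtree T' T → T'.label ⊆ vs := by
  intro T T' vs es X h hs
  induction hs generalizing vs es X with
  | refl => exact IsRTD.self_label_subset h
  | left hsub ih =>
    obtain ⟨-, -, -, vs1, vs2, es1, es2, h1, h2, -, -, -, -, -, -, -, -, hT1, hT2⟩ := h
    exact (ih hT1).trans h1
  | right hsub ih =>
    obtain ⟨-, -, -, vs1, vs2, es1, es2, h1, h2, -, -, -, -, -, -, -, -, hT1, hT2⟩ := h
    exact (ih hT2).trans h2

lemma IsRTD.mono_edges {ends : E → Set V} :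
    ∀ {T : RTree V} {vs es es0 X}, IsRTD ends vs es X T → es0 ⊆ es → IsRTD ends vs es0 X T := by
  intro T
  induction T with
  | nil =>
    intro vs es es0 X h hsub
    exact ⟨h.1, Set.subset_empty_iff.mp (h.2 ▸ hsub)⟩
  | node T1 L T2 ih1 ih2 =>
    intro vs es es0 X h hsub
    obtain ⟨hne, hLvs, hXL, vs1, vs2, es1, es2, h1, h2, he1, he2, hends1, hends2,
      hunion, hdisj, hint, hrest, hT1, hT2⟩ := h
    refine ⟨hne, hLvs, hXL, vs1, vs2, es1 ∩ es0, es2 ∩ es0, h1, h2,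
      Set.inter_subset_right, Set.inter_subset_right,
      fun e he => hends1 e he.1, fun e he => hends2 e he.1, hunion, ?_, hint, ?_,
      ih1 hT1 Set.inter_subset_left, ih2 hT2 Set.inter_subset_left⟩
    · exact Set.subset_empty_iff.mp
        ((Set.inter_subset_inter Set.inter_subset_left Set.inter_subset_left).trans hdisj.subset)
    · intro e he
      exact hrest e ⟨hsub he.1,
        fun hm => he.2 (hm.elim (fun h' => Or.inl ⟨h', he.1⟩) (fun h' => Or.inr ⟨h', he.1⟩))⟩

lemma key_map (endsG : E → Set V) (endsH : F → Set W)
    (αV : V → W) (αE : E → F)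
    (hcomm : ∀ e, endsH (αE e) = αV '' endsG e) :
    ∀ (T : RTree V) (vs : Set V) (es : Set E) (X : Set V),
      IsRTD endsG vs es X T →
      (∀ v w, v ∈ vs → w ∈ vs → v ≠ w → αV v = αV w →
        ∃ T', RTree.Subtree T' T ∧ v ∈ T'.label ∧ w ∈ T'.label) →
      IsRTD endsH (αV '' vs) (αE '' es) (αV '' X) (T.map αV) := by
  intro T
  induction T with
  | nil =>
    intro vs es X h _
    exact ⟨by rw [h.1, Set.image_empty], by rw [h.2, Set.image_empty]⟩
  | node T1 L T2 ih1 ih2 =>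
    intro vs es X h hid
    obtain ⟨hne, hLvs, hXL, vs1, vs2, es1, es2, h1, h2, he1, he2, hends1, hends2,
      hunion, hdisj, hint, hrest, hT1, hT2⟩ := h
    -- descent of the identification hypothesis, side 1
    have hid1 : ∀ v w, v ∈ vs1 → w ∈ vs1 → v ≠ w → αV v = αV w →
        ∃ T', RTree.Subtree T' T1 ∧ v ∈ T'.label ∧ w ∈ T'.label := by
      intro v w hv hw hne' heq
      obtain ⟨T', hT', hvL, hwL⟩ := hid v w (h1 hv) (h1 hw) hne' heq
      have hinL : v ∈ L → w ∈ L →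
          ∃ T', RTree.Subtree T' T1 ∧ v ∈ T'.label ∧ w ∈ T'.label := by
        intro hvL' hwL'
        cases T1 with
        | nil => exact absurd (hT1.1 ▸ hv) (Set.notMem_empty v)
        | node A B C =>
          exact ⟨_, RTree.Subtree.refl _, hT1.2.2.1 ⟨hv, hvL'⟩, hT1.2.2.1 ⟨hw, hwL'⟩⟩
      cases hT' with
      | refl => exact hinL hvL hwL
      | left hs => exact ⟨_, hs, hvL, hwL⟩
      | right hs =>
        exact hinL (hint ⟨hv, IsRTD.label_subset hT2 hs hvL⟩)
          (hint ⟨hw, IsRTD.label_subset hT2 hs hwL⟩)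
    -- descent of the identification hypothesis, side 2
    have hid2 : ∀ v w, v ∈ vs2 → w ∈ vs2 → v ≠ w → αV v = αV w →
        ∃ T', RTree.Subtree T' T2 ∧ v ∈ T'.label ∧ w ∈ T'.label := by
      intro v w hv hw hne' heq
      obtain ⟨T', hT', hvL, hwL⟩ := hid v w (h2 hv) (h2 hw) hne' heq
      have hinL : v ∈ L → w ∈ L →
          ∃ T', RTree.Subtree T' T2 ∧ v ∈ T'.label ∧ w ∈ T'.label := by
        intro hvL' hwL'
        cases T2 with
        | nil => exact absurd (hT2.1 ▸ hv) (Set.notMem_empty v)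
        | node A B C =>
          exact ⟨_, RTree.Subtree.refl _, hT2.2.2.1 ⟨hv, hvL'⟩, hT2.2.2.1 ⟨hw, hwL'⟩⟩
      cases hT' with
      | refl => exact hinL hvL hwL
      | right hs => exact ⟨_, hs, hvL, hwL⟩
      | left hs =>
        exact hinL (hint ⟨IsRTD.label_subset hT1 hs hvL, hv⟩)
          (hint ⟨IsRTD.label_subset hT1 hs hwL, hw⟩)
    -- images of the source sets
    have hX1 : αV '' (vs1 ∩ L) = (αV '' vs1) ∩ (αV '' L) := by
      refine Set.Subset.antisymm (Set.image_inter_subset _ _ _) ?_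
      rintro x ⟨⟨v, hv, rfl⟩, ⟨w, hw, hxw⟩⟩
      by_cases hvw : v = w
      · exact ⟨v, ⟨hv, hvw ▸ hw⟩, rfl⟩
      · obtain ⟨T', hT', hvL, hwL⟩ := hid v w (h1 hv) (hLvs hw) hvw hxw.symm
        cases hT' with
        | refl => exact ⟨v, ⟨hv, hvL⟩, rfl⟩
        | left hs => exact ⟨w, ⟨IsRTD.label_subset hT1 hs hwL, hw⟩, hxw⟩
        | right hs => exact ⟨v, ⟨hv, hint ⟨hv, IsRTD.label_subset hT2 hs hvL⟩⟩, rfl⟩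
    have hX2 : αV '' (vs2 ∩ L) = (αV '' vs2) ∩ (αV '' L) := by
      refine Set.Subset.antisymm (Set.image_inter_subset _ _ _) ?_
      rintro x ⟨⟨v, hv, rfl⟩, ⟨w, hw, hxw⟩⟩
      by_cases hvw : v = w
      · exact ⟨v, ⟨hv, hvw ▸ hw⟩, rfl⟩
      · obtain ⟨T', hT', hvL, hwL⟩ := hid v w (h2 hv) (hLvs hw) hvw hxw.symm
        cases hT' with
        | refl => exact ⟨v, ⟨hv, hvL⟩, rfl⟩
        | right hs => exact ⟨w, ⟨IsRTD.label_subset hT2 hs hwL, hw⟩, hxw⟩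
        | left hs => exact ⟨v, ⟨hv, hint ⟨IsRTD.label_subset hT1 hs hvL, hv⟩⟩, rfl⟩
    refine ⟨hne.image αV, Set.image_mono (f := αV) hLvs, Set.image_mono (f := αV) hXL,
      αV '' vs1, αV '' vs2, αE '' es1, (αE '' es2) \ (αE '' es1),
      Set.image_mono (f := αV) h1, Set.image_mono (f := αV) h2,
      Set.image_mono (f := αE) he1, Set.diff_subset.trans (Set.image_mono (f := αE) he2),
      ?_, ?_, ?_, ?_, ?_, ?_, ?_, ?_⟩
    · rintro f ⟨e, he, rfl⟩
      exact (hcomm e) ▸ Set.image_mono (f := αV) (hends1 e he)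
    · rintro f ⟨⟨e, he, rfl⟩, -⟩
      exact (hcomm e) ▸ Set.image_mono (f := αV) (hends2 e he)
    · rw [← Set.image_union, ← Set.image_union, hunion]
    · exact Set.inter_diff_self _ _
    · rintro x ⟨⟨v, hv, rfl⟩, ⟨w, hw, hxw⟩⟩
      by_cases hvw : v = w
      · exact ⟨v, hint ⟨hv, hvw ▸ hw⟩, rfl⟩
      · obtain ⟨T', hT', hvL, hwL⟩ := hid v w (h1 hv) (h2 hw) hvw hxw.symm
        cases hT' with
        | refl => exact ⟨v, hvL, rfl⟩
        | left hs => exact ⟨w, hint ⟨IsRTD.label_subset hT1 hs hwL, hw⟩, hxw⟩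
        | right hs => exact ⟨v, hint ⟨hv, IsRTD.label_subset hT2 hs hvL⟩, rfl⟩
    · rintro f ⟨⟨e, he, rfl⟩, hf2⟩
      have he1' : e ∉ es1 := fun h' => hf2 (Or.inl ⟨e, h', rfl⟩)
      have he2' : e ∉ es2 := by
        intro h'
        by_cases hf1 : αE e ∈ αE '' es1
        · exact hf2 (Or.inl hf1)
        · exact hf2 (Or.inr ⟨⟨e, h', rfl⟩, hf1⟩)
      exact (hcomm e) ▸ Set.image_mono (f := αV)
        (hrest e ⟨he, fun hm => hm.elim he1' he2'⟩)
    · have := ih1 vs1 es1 (vs1 ∩ L) hT1 hid1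
      rwa [hX1] at this
    · have := IsRTD.mono_edges (es0 := (αE '' es2) \ (αE '' es1))
        (ih2 vs2 es2 (vs2 ∩ L) hT2 hid2) Set.diff_subset
      rwa [hX2] at this

end Aux

/-- A surjective graph homomorphism respecting the structure of a
recursive tree decomposition transports it, without increasing the width. -/
theorem stmt12 {V E W F : Type} [Finite V] [Finite E] [Finite W] [Finite F]
    (endsG : E → Set V) (hsG : EndsSmall endsG)
    (endsH : F → Set W) (hsH : EndsSmall endsH)
    (X : Set V) (Y : Set W)
    (αV : V → W) (αE : E → F)
    (hsurjV : Function.Surjective αV) (hsurjE : Function.Surjective αE)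
    (hcomm : ∀ e, endsH (αE e) = αV '' endsG e)
    (hX : αV '' X = Y)
    (T : RTree V) (hT : IsRTD endsG Set.univ Set.univ X T)
    (hident : ∀ v w : V, v ≠ w → αV v = αV w →
      ∃ T' : RTree V, RTree.Subtree T' T ∧ v ∈ T'.label ∧ w ∈ T'.label) :
    ∃ T' : RTree W, IsRTD endsH Set.univ Set.univ Y T' ∧ T'.width ≤ T.width := by
  refine ⟨T.map αV, ?_, RTree.width_map_le αV T⟩
  have := key_map endsG endsH αV αE hcomm T Set.univ Set.univ X hT
    (fun v w _ _ => hident v w)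
  rwa [Set.image_univ, hsurjV.range_eq, Set.image_univ, hsurjE.range_eq, hX] at this

end MWidth
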